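/- Let B be the simple graph on vertex set (ZMod 5) × (ZMod 5) in which (a, i) is adjacent to (b, j) if and only if b - a ∈ {1, -1} in ZMod 5. For each pair (d, i) ∈ (ZMod 5) × (ZMod 5), the closed walk through the five vertices (k, i + d·k) for k = 0, 1, 2, 3, 4 (in this cyclic order) is a cycle of length 5 in B, and the edge sets of these 25 cycles partition the edge set of B. -/

import Mathlib

open SimpleGraph

/-- The 5-blowup of the 5-cycle: `(a, i)` is adjacent to `(b, j)` iff
`b - a ∈ {1, -1}` in `ZMod 5`. -/
def blowupC5 : SimpleGraph (ZMod 5 × ZMod 5) where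
  Adj u v := v.1 - u.1 = 1 ∨ v.1 - u.1 = -1
  symm := by
    constructor
    intro u v h
    rcases h with h | h
    · right
      rw [← neg_sub, h]
    · left
      rw [← neg_sub, h, neg_neg]
  loopless := by
    constructor
    intro u h
    simp only [sub_self] at h
    rcases h with h | h <;> exact absurd h (by decide)

/-- The `k`-th vertex of the base cycle with parameters `(d, i)`. -/
def vtx (d i k : ZMod 5) : ZMod 5 × ZMod 5 := (k, i + d * k)

lemma adj_step (d i k : ZMod 5) : blowupC5.Adj (vtx d i k) (vtx d i (k + 1)) :=
  Or.inl (by show (k + 1) - k = 1; ring)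

lemma adj_last (d i : ZMod 5) : blowupC5.Adj (vtx d i 4) (vtx d i 0) :=
  Or.inl (by show (0 : ZMod 5) - 4 = 1; decide)

/-- The closed walk through the five vertices `(k, i + d*k)`, `k = 0,…,4`. -/
def baseWalk (d i : ZMod 5) : blowupC5.Walk (vtx d i 0) (vtx d i 0) :=
  .cons (adj_step d i 0) (.cons (adj_step d i 1) (.cons (adj_step d i 2)
    (.cons (adj_step d i 3) (.cons (adj_last d i) .nil))))

lemma edges_eq (d i : ZMod 5) : (baseWalk d i).edges =
    [s(vtx d i 0, vtx d i 1), s(vtx d i 1, vtx d i 2), s(vtx d i 2, vtx d i 3),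
     s(vtx d i 3, vtx d i 4), s(vtx d i 4, vtx d i 0)] := rfl

lemma mem_edges_iff (d i : ZMod 5) (e : Sym2 (ZMod 5 × ZMod 5)) :
    e ∈ (baseWalk d i).edges ↔ ∃ k : ZMod 5, e = s(vtx d i k, vtx d i (k+1)) := by
  have h5 : (5:ZMod 5) = 0 := by decide
  have h40 : vtx d i (4+1) = vtx d i 0 := by norm_num [vtx, Prod.ext_iff]; exact ⟨h5, by rw [h5, mul_zero]⟩
  constructor
  · intro h
    simp only [edges_eq, List.mem_cons, List.not_mem_nil, or_false] at h
    rcases h with h | h | h | h | h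
    · exact ⟨0, by rw [h]; norm_num⟩
    · exact ⟨1, by rw [h]; norm_num⟩
    · exact ⟨2, by rw [h]; norm_num⟩
    · exact ⟨3, by rw [h]; norm_num⟩
    · exact ⟨4, by rw [h, h40]⟩
  · rintro ⟨k, rfl⟩
    have : k = 0 ∨ k = 1 ∨ k = 2 ∨ k = 3 ∨ k = 4 := by revert k; decide
    rcases this with rfl | rfl | rfl | rfl | rfl <;>
      simp [edges_eq, h40] <;> norm_num

lemma edges_nodup : ∀ d i : ZMod 5,
    (baseWalk d i).edges.Nodup ∧ (baseWalk d i).support.tail.Nodup := by decide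

lemma disj {d i d' i' : ZMod 5} (e : Sym2 (ZMod 5 × ZMod 5))
    (h : e ∈ (baseWalk d i).edges) (h' : e ∈ (baseWalk d' i').edges) :
    d = d' ∧ i = i' := by
  rw [mem_edges_iff] at h h'
  obtain ⟨k, rfl⟩ := h
  obtain ⟨k', hk⟩ := h'
  rw [Sym2.eq_iff] at hk
  simp only [vtx, Prod.ext_iff] at hk
  rcases hk with ⟨⟨hk1, hx⟩, ⟨hk2, hy⟩⟩ | ⟨⟨hk1, hx⟩, ⟨hk2, hy⟩⟩
  · subst hk1
    have hd : d = d' := by linear_combination hy - hx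
    exact ⟨hd, by linear_combination hx - k * hd⟩
  · exfalso
    have : (0 : ZMod 5) = 2 := by linear_combination hk1 - hk2
    exact absurd this (by decide)

lemma exists_edge (a b x y : ZMod 5) (h : b = a + 1) :
    ∃ p : ZMod 5 × ZMod 5, ∃ k : ZMod 5,
      s(((a,x) : ZMod 5 × ZMod 5), (b,y)) = s(vtx p.1 p.2 k, vtx p.1 p.2 (k+1)) := by
  refine ⟨(y - x, x - (y - x) * a), a, ?_⟩
  subst h
  rw [Sym2.eq_iff]
  left
  constructor <;> simp [vtx, Prod.ext_iff] <;> ring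

lemma union_eq (e : Sym2 (ZMod 5 × ZMod 5)) :
    (∃ p : ZMod 5 × ZMod 5, e ∈ (baseWalk p.1 p.2).edges) ↔ e ∈ blowupC5.edgeSet := by
  induction e using Sym2.ind with
  | _ u v =>
    obtain ⟨a, x⟩ := u
    obtain ⟨b, y⟩ := v
    rw [mem_edgeSet]
    constructor
    · rintro ⟨p, hp⟩
      rw [mem_edges_iff] at hp
      obtain ⟨k, hk⟩ := hp
      rw [Sym2.eq_iff] at hk
      rcases hk with ⟨h1, h2⟩ | ⟨h1, h2⟩
      · rw [h1, h2]; exact adj_step p.1 p.2 k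
      · rw [h1, h2]; exact (adj_step p.1 p.2 k).symm
    · intro h
      rcases h with h | h
      · obtain ⟨p, k, hk⟩ := exists_edge a b x y (by linear_combination h)
        exact ⟨p, (mem_edges_iff p.1 p.2 _).mpr ⟨k, hk⟩⟩
      · obtain ⟨p, k, hk⟩ := exists_edge b a y x (by linear_combination -h)
        refine ⟨p, (mem_edges_iff p.1 p.2 _).mpr ⟨k, ?_⟩⟩
        rw [Sym2.eq_swap]; exact hk


theorem stmt_6 :
    (∀ d i : ZMod 5, (baseWalk d i).IsCycle ∧ (baseWalk d i).length = 5) ∧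
    (∀ p q : ZMod 5 × ZMod 5, p ≠ q →
      Disjoint {e | e ∈ (baseWalk p.1 p.2).edges} {e | e ∈ (baseWalk q.1 q.2).edges}) ∧
    (⋃ p : ZMod 5 × ZMod 5, {e | e ∈ (baseWalk p.1 p.2).edges}) = blowupC5.edgeSet := by
  refine ⟨fun d i => ⟨⟨⟨⟨(edges_nodup d i).1⟩, by simp [baseWalk]⟩, (edges_nodup d i).2⟩, rfl⟩,
    ?_, ?_⟩
  · intro p q hne
    rw [Set.disjoint_left]
    intro e he he'
    exact hne (Prod.ext (disj e he he').1 (disj e he he').2)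
  · ext e
    simp only [Set.mem_iUnion, Set.mem_setOf_eq]
    exact union_eq e
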